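/- arXiv:2503.01808 — 4 statements merged into one kernel-verified Lean document; each statement's English description precedes it below -/
import Mathlib

section
/- Let G be a directed graph whose underlying undirected graph admits a tree decomposition T such that: (i) for every bag X_t, the induced directed subgraph G[X_t] is acyclic, and (ii) for every bag X_t and every pair of distinct vertices p, q ∈ X_t, exactly one of the arcs (p,q) or (q,p) is present in G. Moreover assume every arc of G has both endpoints in some common bag. Then G is acyclic. -/
/-- A directed cycle of positive length: distinct vertices arranged cyclically
with an arc from each to the next. -/
def HasDirCycle {V : Type*} (G : V → V → Prop) : Prop :=
  ∃ (n : ℕ) (hn : 0 < n) (f : Fin n → V), Function.Injective f ∧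
    ∀ i : Fin n, G (f i) (f ⟨(i.1 + 1) % n, Nat.mod_lt _ hn⟩)

namespace TreeDecompAux

open SimpleGraph

variable {ι : Type*} {T : SimpleGraph ι}

/-- The unique path between two vertices of a tree. -/
noncomputable def tp (hT : T.IsTree) (a b : ι) : T.Walk a b :=
  (hT.existsUnique_path a b).exists.choose

lemma tp_isPath (hT : T.IsTree) (a b : ι) : (tp hT a b).IsPath :=
  (hT.existsUnique_path a b).exists.choose_spec

lemma tp_eq (hT : T.IsTree) {a b : ι} {p : T.Walk a b} (hp : p.IsPath) :
    p = tp hT a b :=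
  Subtype.ext_iff.mp (hT.IsAcyclic.path_unique ⟨p, hp⟩ ⟨tp hT a b, tp_isPath hT a b⟩)

/-- The unique path between two vertices of a connected induced subset stays in the subset. -/
lemma tp_support_subset (hT : T.IsTree) {S : Set ι} (hS : (T.induce S).Connected)
    {a b : ι} (ha : a ∈ S) (hb : b ∈ S) : ∀ x ∈ (tp hT a b).support, x ∈ S := by
  classical
  obtain ⟨w⟩ := hS.preconnected ⟨a, ha⟩ ⟨b, hb⟩
  let w' : T.Walk a b := w.map (SimpleGraph.Embedding.induce S).toHom
  have hsub : ∀ x ∈ w'.support, x ∈ S := by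
    intro x hx
    rw [show w'.support = w.support.map (SimpleGraph.Embedding.induce S).toHom from
      Walk.support_map _ _] at hx
    obtain ⟨y, _, rfl⟩ := List.mem_map.mp hx
    exact y.2
  have hb' : w'.bypass = tp hT a b := tp_eq hT (Walk.bypass_isPath w')
  intro x hx
  rw [← hb'] at hx
  exact hsub x (Walk.support_bypass_subset w' hx)

lemma isPath_concat {a b c : ι} {p : T.Walk a b} (hp : p.IsPath) (h : T.Adj b c)
    (hc : c ∉ p.support) : (p.concat h).IsPath := by
  rw [Walk.isPath_def, Walk.support_concat, List.nodup_append]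
  refine ⟨hp.support_nodup, List.nodup_singleton c, ?_⟩
  intro x hx y hx'
  simp only [List.mem_singleton] at hx'
  subst hx'
  exact fun h => hc (h ▸ hx)

lemma length_le (hT : T.IsTree) {r b x : ι} (hx : x ∈ (tp hT r b).support) :
    (tp hT r x).length ≤ (tp hT r b).length := by
  classical
  rw [← tp_eq hT ((tp_isPath hT r b).takeUntil hx)]
  exact Walk.length_takeUntil_le _ hx

lemma length_lt (hT : T.IsTree) {r b x : ι} (hx : x ∈ (tp hT r b).support) (hne : x ≠ b) :
    (tp hT r x).length < (tp hT r b).length := by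
  classical
  have hs := congrArg Walk.length (Walk.take_spec (tp hT r b) hx)
  rw [Walk.length_append] at hs
  have ht := congrArg Walk.length (tp_eq hT ((tp_isPath hT r b).takeUntil hx))
  have hd : ((tp hT r b).dropUntil x hx).length ≠ 0 :=
    fun h0 => hne (Walk.eq_of_length_eq_zero h0)
  omega

lemma mem_split (hT : T.IsTree) {a b u v : ι} (hu : u ∈ (tp hT a b).support)
    (hv : v ∈ (tp hT a b).support) :
    u ∈ (tp hT a v).support ∨ u ∈ (tp hT v b).support := by
  classical
  have h1 := tp_eq hT ((tp_isPath hT a b).takeUntil hv)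
  have h2 := tp_eq hT ((tp_isPath hT a b).dropUntil hv)
  rw [← Walk.take_spec (tp hT a b) hv, Walk.mem_support_append_iff, h1, h2] at hu
  exact hu


/-- Key induction for `exists_gate`. -/
lemma gate_key (hT : T.IsTree) {S : Set ι} (r : ι) :
    ∀ (z x : ι) (q : T.Walk x z), q.IsPath → (∀ w ∈ q.support, w ∈ S) →
      (∀ x ∈ S, (tp hT r z).length ≤ (tp hT r x).length) → z ∈ (tp hT r x).support := by
  classical
  intro z x q
  induction q with
  | nil => exact fun _ _ _ => Walk.end_mem_support _
  | @cons x y z hadj q' ih =>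
    intro hq hsup hmin
    have hy : z ∈ (tp hT r y).support :=
      ih hq.of_cons (fun w hw => hsup w (by simp [hw])) hmin
    by_cases hx : x ∈ (tp hT r y).support
    · have htake := tp_eq hT ((tp_isPath hT r y).takeUntil hx)
      have hdrop := tp_eq hT ((tp_isPath hT r y).dropUntil hx)
      have hedge : (Walk.cons hadj Walk.nil) = tp hT x y :=
        tp_eq hT (by simp [Walk.cons_isPath_iff, hadj.ne])
      have hmem : z ∈ ((tp hT r y).takeUntil x hx).support ∨
          z ∈ ((tp hT r y).dropUntil x hx).support := by
        rw [← Walk.mem_support_append_iff, Walk.take_spec]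
        exact hy
      rcases hmem with hm | hm
      · rwa [htake] at hm
      · rw [hdrop, ← hedge] at hm
        simp only [Walk.support_cons, Walk.support_nil, List.mem_cons,
          List.mem_singleton, List.not_mem_nil, or_false] at hm
        rcases hm with rfl | rfl
        · exact Walk.end_mem_support _
        · have hxz : x ≠ z := hadj.ne
          have hlt := length_lt hT hx hxz
          have hxS : x ∈ S := hsup x (by simp)
          exact absurd (hmin x hxS) (not_le.mpr hlt)
    · have hconcat : (tp hT r y).concat hadj.symm = tp hT r x :=
        tp_eq hT (isPath_concat (tp_isPath hT r y) hadj.symm hx)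
      rw [← hconcat, Walk.support_concat]
      simp [hy]

/-- Every nonempty connected induced subset `S` of a tree has a "gate" with respect to a
root `r`: a vertex `g ∈ S` lying on every path from `r` to a point of `S`. -/
lemma exists_gate (hT : T.IsTree) {S : Set ι} (hS : (T.induce S).Connected)
    (hne : S.Nonempty) (r : ι) :
    ∃ g ∈ S, ∀ x ∈ S, g ∈ (tp hT r x).support := by
  classical
  have hd : {m : ℕ | ∃ x ∈ S, (tp hT r x).length = m}.Nonempty := by
    obtain ⟨x0, hx0⟩ := hne
    exact ⟨_, x0, hx0, rfl⟩
  obtain ⟨g, hgS, hglen⟩ := Nat.sInf_mem hd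
  have hmin : ∀ x ∈ S, (tp hT r g).length ≤ (tp hT r x).length := by
    intro x hx
    rw [hglen]
    exact Nat.sInf_le ⟨x, hx, rfl⟩
  refine ⟨g, hgS, fun x hx => ?_⟩
  exact gate_key hT r g x (tp hT x g) (tp_isPath hT x g)
    (tp_support_subset hT hS hx hgS) hmin

/-- In a tree, given a cyclic family of connected subsets such that consecutive members
intersect, some member meets both of its neighbours at a single common vertex. -/
lemma exists_triple (hT : T.IsTree) {n : ℕ} [NeZero n] (S : Fin n → Set ι)
    (hconn : ∀ i, (T.induce (S i)).Connected)
    (t : Fin n → ι) (ht1 : ∀ i, t i ∈ S i) (ht2 : ∀ i, t i ∈ S (i + 1)) :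
    ∃ (i : Fin n) (s : ι), s ∈ S (i - 1) ∧ s ∈ S i ∧ s ∈ S (i + 1) := by
  classical
  have hgate := fun i => exists_gate hT (hconn i) ⟨t i, ht1 i⟩ (t 0)
  choose g hmem hg using hgate
  obtain ⟨i, hi⟩ := Finite.exists_max fun i => (tp hT (t 0) (g i)).length
  have main : ∀ (j : Fin n) (u : ι), u ∈ S i → u ∈ S j → g i ∈ S j := by
    intro j u hui huj
    have h1 : g i ∈ (tp hT (t 0) u).support := hg i u hui
    have h2 : g j ∈ (tp hT (t 0) u).support := hg j u huj
    rcases mem_split hT h1 h2 with hc | hc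
    · by_cases heq : g i = g j
      · rw [heq]; exact hmem j
      · exact absurd (hi j) (not_le.mpr (length_lt hT hc heq))
    · exact tp_support_subset hT (hconn j) (hmem j) huj _ hc
  refine ⟨i, g i, main (i - 1) (t (i - 1)) ?_ (ht1 (i - 1)), hmem i,
    main (i + 1) (t i) (ht1 i) (ht2 i)⟩
  have h := ht2 (i - 1)
  rwa [show i - 1 + 1 = i by abel] at h


end TreeDecompAux

namespace TreeDecompAux

lemma mk_mod_eq_add {n : ℕ} [NeZero n] (hn : 0 < n) (i : Fin n) :
    (⟨(i.1 + 1) % n, Nat.mod_lt _ hn⟩ : Fin n) = i + 1 := by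
  apply Fin.ext
  rw [Fin.add_def, Fin.val_one']
  show (i.1 + 1) % n = (i.1 + 1 % n) % n
  rw [Nat.add_mod_mod]

lemma hasDirCycle_one {V : Type*} {R : V → V → Prop} {a : V} (h : R a a) : HasDirCycle R :=
  ⟨1, one_pos, fun _ => a, fun x y _ => Subsingleton.elim x y, fun _ => h⟩

lemma hasDirCycle_three {V : Type*} {R : V → V → Prop} {p a q : V}
    (hpa : p ≠ a) (haq : a ≠ q) (hpq : p ≠ q)
    (h1 : R p a) (h2 : R a q) (h3 : R q p) : HasDirCycle R := by
  refine ⟨3, by norm_num, fun j => if j.1 = 0 then p else if j.1 = 1 then a else q, ?_, ?_⟩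
  · intro x y hxy
    fin_cases x <;> fin_cases y <;> simp_all
  · intro j
    fin_cases j <;> simp <;> assumption


lemma aux {V ι : Type*} (G : V → V → Prop) (T : SimpleGraph ι) (X : ι → Set V)
    (hT : T.IsTree)
    (hT2 : ∀ u v : V, G u v ∨ G v u → ∃ t : ι, u ∈ X t ∧ v ∈ X t)
    (hT3 : ∀ v : V, (T.induce {t : ι | v ∈ X t}).Connected)
    (hbagAcyclic : ∀ t : ι, ¬ HasDirCycle (fun u v => G u v ∧ u ∈ X t ∧ v ∈ X t))
    (hbagTotal : ∀ t : ι, ∀ p ∈ X t, ∀ q ∈ X t, p ≠ q → (G p q ↔ ¬ G q p)) :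
    ∀ (n : ℕ) (f : Fin n → V) (hn : 0 < n), Function.Injective f →
      (∀ i : Fin n, G (f i) (f ⟨(i.1 + 1) % n, Nat.mod_lt _ hn⟩)) → False := by
  intro n
  induction n using Nat.strong_induction_on with
  | _ n IH =>
  intro f hn hinj hf
  haveI : NeZero n := ⟨hn.ne'⟩
  have hf' : ∀ i : Fin n, G (f i) (f (i + 1)) := fun i => by
    rw [← mk_mod_eq_add hn i]; exact hf i
  choose t ht1 ht2 using fun i : Fin n => hT2 (f i) (f (i + 1)) (Or.inl (hf' i))
  obtain ⟨i, s, hs1, hs2, hs3⟩ :=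
    exists_triple hT (fun i => {t : ι | f i ∈ X t}) (fun i => hT3 (f i)) t ht1 ht2
  by_cases hn1 : n = 1
  · subst hn1
    have hii : i + 1 = i := Subsingleton.elim _ _
    have hloop : G (f i) (f i) := by have := hf' i; rwa [hii] at this
    exact hbagAcyclic s (hasDirCycle_one ⟨hloop, hs2, hs2⟩)
  by_cases hn2 : n = 2
  · subst hn2
    have h11 : (1 : Fin 2) + 1 = 0 := rfl
    have h2 : i + 1 + 1 = i := by
      rw [add_assoc, h11, add_zero]
    have harc2 : G (f (i + 1)) (f i) := by have := hf' (i + 1); rwa [h2] at this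
    have hne : i ≠ i + 1 := by
      intro h
      have hh := congrArg Fin.val h
      rw [Fin.val_add, show (1 : Fin 2).val = 1 from rfl] at hh
      have := i.isLt
      omega
    exact (hbagTotal s (f i) hs2 (f (i + 1)) hs3 (hinj.ne hne)).mp (hf' i) harc2
  have h3 : 3 ≤ n := by omega
  have hv1 : (1 : Fin n).val = 1 := by
    rw [Fin.val_one']; exact Nat.mod_eq_of_lt (by omega)
  have hv2 : ((1 : Fin n) + 1).val = 2 := by
    rw [Fin.val_add, hv1]; exact Nat.mod_eq_of_lt (by omega)
  have h10 : (1 : Fin n) ≠ 0 := by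
    intro h
    have := congrArg Fin.val h
    rw [hv1] at this
    simp at this
  have h20 : (1 : Fin n) + 1 ≠ 0 := by
    intro h
    have := congrArg Fin.val h
    rw [hv2] at this
    simp at this
  have hne01 : i ≠ i + 1 := fun h => h10 (left_eq_add.mp h)
  have hne_m1 : i - 1 ≠ i := fun h => h10 (sub_eq_self.mp h)
  have hne_pm : i - 1 ≠ i + 1 := by
    intro h
    have h' : i = i + ((1 : Fin n) + 1) := by
      rw [← add_assoc, ← sub_eq_iff_eq_add.mp h]
    exact h20 (left_eq_add.mp h')
  have hpa : G (f (i - 1)) (f i) := by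
    have := hf' (i - 1)
    rwa [show i - 1 + 1 = i by abel] at this
  have haq : G (f i) (f (i + 1)) := hf' i
  by_cases hqp : G (f (i + 1)) (f (i - 1))
  · exact hbagAcyclic s (hasDirCycle_three (hinj.ne hne_m1) (hinj.ne hne01)
      (hinj.ne hne_pm) ⟨hpa, hs1, hs2⟩ ⟨haq, hs2, hs3⟩ ⟨hqp, hs3, hs1⟩)
  · have hpq : G (f (i - 1)) (f (i + 1)) :=
      (hbagTotal s (f (i - 1)) hs1 (f (i + 1)) hs3 (hinj.ne hne_pm)).mpr hqp
    set m := n - 1 with hm_def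
    have hm : 0 < m := by omega
    have hmlt : m < n := by omega
    have hmn : ∀ j : Fin m, j.1 < n := fun j => by omega
    let k : Fin m → Fin n := fun j => i + 1 + ⟨j.1, hmn j⟩
    have hkinj : Function.Injective k := by
      intro a b hab
      have h' := add_left_cancel hab
      exact Fin.ext (by simpa using congrArg Fin.val h')
    apply IH m hmlt (fun j => f (k j)) hm (hinj.comp hkinj)
    intro j
    show G (f (k j)) (f (k ⟨(j.1 + 1) % m, Nat.mod_lt _ hm⟩))
    by_cases hj : j.1 + 1 < m
    · have hidx : (⟨(j.1 + 1) % m, Nat.mod_lt _ hm⟩ : Fin m) = ⟨j.1 + 1, hj⟩ :=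
        Fin.ext (Nat.mod_eq_of_lt hj)
      rw [hidx]
      have hstep : (⟨j.1 + 1, hmn ⟨j.1 + 1, hj⟩⟩ : Fin n) = ⟨j.1, hmn j⟩ + 1 := by
        apply Fin.ext
        rw [Fin.val_add, hv1]
        show j.1 + 1 = (j.1 + 1) % n
        exact (Nat.mod_eq_of_lt (by omega)).symm
      have hk1 : k ⟨j.1 + 1, hj⟩ = k j + 1 := by
        show i + 1 + (⟨j.1 + 1, hmn ⟨j.1 + 1, hj⟩⟩ : Fin n) = i + 1 + ⟨j.1, hmn j⟩ + 1
        rw [hstep]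
        abel
      rw [hk1]
      exact hf' (k j)
    · have hj2 : j.1 + 1 = m := by omega
      have hidx : (⟨(j.1 + 1) % m, Nat.mod_lt _ hm⟩ : Fin m) = ⟨0, hm⟩ :=
        Fin.ext (by rw [hj2]; exact Nat.mod_self m)
      rw [hidx]
      have h0 : k ⟨0, hm⟩ = i + 1 := by
        show i + 1 + (⟨0, hmn ⟨0, hm⟩⟩ : Fin n) = i + 1
        rw [show (⟨0, hmn ⟨0, hm⟩⟩ : Fin n) = 0 from Fin.ext (by simp), add_zero]
      have hkj : k j = i - 1 := by
        have hz : (⟨j.1, hmn j⟩ : Fin n) + ((1 : Fin n) + 1) = 0 := by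
          apply Fin.ext
          rw [Fin.val_add, hv2]
          show (j.1 + 2) % n = (0 : Fin n).val
          rw [show j.1 + 2 = n by omega, Nat.mod_self, Fin.val_zero]
        have hneg := eq_neg_of_add_eq_zero_left hz
        show i + 1 + (⟨j.1, hmn j⟩ : Fin n) = i - 1
        rw [hneg]
        abel
      rw [hkj, h0]
      exact hpq

end TreeDecompAux

/-- Let `G` be a directed graph whose underlying undirected graph admits a tree
decomposition `(T, X)` such that (i) every bag induces an acyclic directed
subgraph, and (ii) within every bag, every pair of distinct vertices is joined
by exactly one arc. Moreover every arc of `G` has both endpoints in a common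
bag. Then `G` is acyclic. -/
theorem acyclic_of_treeDecomposition {V ι : Type*} (G : V → V → Prop)
    (T : SimpleGraph ι) (X : ι → Set V)
    (hT : T.IsTree)
    (hT1 : ∀ v : V, ∃ t : ι, v ∈ X t)
    (hT2 : ∀ u v : V, G u v ∨ G v u → ∃ t : ι, u ∈ X t ∧ v ∈ X t)
    (hT3 : ∀ v : V, (T.induce {t : ι | v ∈ X t}).Connected)
    (hbagAcyclic : ∀ t : ι,
      ¬ HasDirCycle (fun u v => G u v ∧ u ∈ X t ∧ v ∈ X t))
    (hbagTotal : ∀ t : ι, ∀ p ∈ X t, ∀ q ∈ X t, p ≠ q → (G p q ↔ ¬ G q p)) :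
    ¬ HasDirCycle G := by
  rintro ⟨n, hn, f, hinj, hf⟩
  exact TreeDecompAux.aux G T X hT hT2 hT3 hbagAcyclic hbagTotal n f hn hinj hf
end

section
/- Let G be a finite graph and let z be a new vertex not in V(G). Consider the set of betweenness restrictions R = {(u, z, v) : {u,v} ∈ E(G)} over the ground set V(G) ∪ {z}. Then G has a cut (S, T) with cut set of size at least k if and only if there is a strict total order ≺ on V(G) ∪ {z} satisfying at least k of the restrictions in R. -/
/-- Let `G` be a finite graph and let `z` be a new vertex (modelled as `none`
in `Option V`). Consider the betweenness restrictions `(u, z, v)` for every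
edge `{u,v}` of `G`. Then `G` has a cut with cut set of size at least `k` iff
there is a strict total order `≺` on `V(G) ∪ {z}` satisfying at least `k` of
the restrictions. -/
theorem maxcut_iff_betweenness {V : Type*} [Fintype V] (G : SimpleGraph V)
    (k : ℕ) :
    (∃ S : Set V,
        k ≤ {e ∈ G.edgeSet | ∃ u v : V, e = s(u, v) ∧ u ∈ S ∧ v ∉ S}.ncard) ↔
    (∃ r : Option V → Option V → Prop, IsStrictTotalOrder (Option V) r ∧
        k ≤ {e ∈ G.edgeSet | ∃ u v : V, e = s(u, v) ∧
              ((r (some u) none ∧ r none (some v)) ∨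
               (r (some v) none ∧ r none (some u)))}.ncard) := by
  classical
  constructor
  · rintro ⟨S, hS⟩
    set L : Option V → ℕ := fun a => match a with
      | none => 1
      | some v => if v ∈ S then 0 else 2 with hL
    set w : Option V → Option V → Prop := WellOrderingRel with hw
    haveI : IsWellOrder (Option V) w := WellOrderingRel.isWellOrder
    refine ⟨fun a b => L a < L b ∨ (L a = L b ∧ w a b), ?_, ?_⟩
    · refine { trichotomous := ?_, irrefl := ?_, trans := ?_ }
      · intro a b
        rcases lt_trichotomy (L a) (L b) with h | h | h
        · exact fun h1 _ => absurd (Or.inl h) h1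
        · rcases trichotomous_of w a b with hw' | rfl | hw'
          · exact fun h1 _ => absurd (Or.inr ⟨h, hw'⟩) h1
          · exact fun _ _ => rfl
          · exact fun _ h2 => absurd (Or.inr ⟨h.symm, hw'⟩) h2
        · exact fun _ h2 => absurd (Or.inl h) h2
      · intro a h
        rcases h with h | ⟨_, h⟩
        · exact lt_irrefl _ h
        · exact irrefl_of w a h
      · intro a b c hab hbc
        rcases hab with hab | ⟨hab, hab'⟩ <;> rcases hbc with hbc | ⟨hbc, hbc'⟩
        · exact Or.inl (hab.trans hbc)
        · exact Or.inl (hbc ▸ hab)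
        · exact Or.inl (hab ▸ hbc)
        · exact Or.inr ⟨hab.trans hbc, trans_of w hab' hbc'⟩
    · refine le_trans hS (Set.ncard_le_ncard ?_ (Set.toFinite _))
      rintro e ⟨he, u, v, rfl, huS, hvS⟩
      refine ⟨he, u, v, rfl, Or.inl ⟨?_, ?_⟩⟩
      · left; simp [hL, huS]
      · left; simp [hL, hvS]
  · rintro ⟨r, hr, hk⟩
    refine ⟨{v | r (some v) none}, le_trans hk (Set.ncard_le_ncard ?_ (Set.toFinite _))⟩
    have asymm : ∀ a b : Option V, r a b → ¬ r b a := by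
      intro a b h1 h2
      exact hr.irrefl a (hr.trans _ _ _ h1 h2)
    rintro e ⟨he, u, v, rfl, hcase⟩
    rcases hcase with ⟨h1, h2⟩ | ⟨h1, h2⟩
    · exact ⟨he, u, v, rfl, h1, asymm _ _ h2⟩
    · exact ⟨he, v, u, Sym2.eq_swap, h1, asymm _ _ h2⟩
end

section
/- Let S be a finite set, R ⊆ S × S × S a set of restrictions with pairwise-distinct entries, and β a positive integer. Construct the instance consisting of β+1 disjoint copies of (S, R), i.e., ground set S × {0,...,β} with restriction set R' = {((a,i),(b,i),(c,i)) : (a,b,c) ∈ R, 0 ≤ i ≤ β}. Then the minimum number of violated restrictions of R' over all total orders on S × {0,...,β} equals (β+1) times the minimum number of violated restrictions of R over all total orders on S. In particular, this minimum is divisible by β+1. -/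
/-- The number of restrictions in `R` violated by the strict total order `r`:
a restriction `(a,b,c)` is satisfied if `a ≺ b ≺ c` or `c ≺ b ≺ a`. -/
noncomputable def violCount {S : Type*} (R : Set (S × S × S)) (r : S → S → Prop) : ℕ :=
  {t ∈ R | ¬ ((r t.1 t.2.1 ∧ r t.2.1 t.2.2) ∨ (r t.2.2 t.2.1 ∧ r t.2.1 t.1))}.ncard

lemma nat_card_sigma' {ι : Type*} [Fintype ι] (f : ι → Type*) [∀ i, Finite (f i)] :
    Nat.card (Σ i, f i) = ∑ i, Nat.card (f i) := by
  have : ∀ i, Fintype (f i) := fun i => Fintype.ofFinite _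
  simp [Nat.card_eq_fintype_card, Fintype.card_sigma]

lemma viol_sum {S : Type*} [Finite S] (R : Set (S × S × S)) (β : ℕ)
    (R' : Set ((S × Fin (β + 1)) × (S × Fin (β + 1)) × (S × Fin (β + 1))))
    (hR' : R' = {t | ∃ a b c : S, ∃ i : Fin (β + 1),
        (a, b, c) ∈ R ∧ t = ((a, i), (b, i), (c, i))})
    (r' : S × Fin (β + 1) → S × Fin (β + 1) → Prop) :
    violCount R' r' = ∑ i : Fin (β + 1),
      violCount R (fun a b => r' (a, i) (b, i)) := by
  classical
  set P : (S × Fin (β+1)) × (S × Fin (β+1)) × (S × Fin (β+1)) → Prop :=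
    fun t => ¬ ((r' t.1 t.2.1 ∧ r' t.2.1 t.2.2) ∨ (r' t.2.2 t.2.1 ∧ r' t.2.1 t.1)) with hP
  have key : {t ∈ R' | P t} ≃
      Σ i : Fin (β+1), {t ∈ R | ¬ (((r' (t.1, i) (t.2.1, i)) ∧ r' (t.2.1, i) (t.2.2, i)) ∨
        (r' (t.2.2, i) (t.2.1, i) ∧ r' (t.2.1, i) (t.1, i)))} := by
    refine ⟨fun x => ⟨x.1.1.2, ⟨(x.1.1.1, x.1.2.1.1, x.1.2.2.1), ?_⟩⟩,
      fun y => ⟨((y.2.1.1, y.1), (y.2.1.2.1, y.1), (y.2.1.2.2, y.1)), ?_⟩, ?_, ?_⟩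
    · obtain ⟨t, ht, hv⟩ := x
      rw [hR'] at ht
      obtain ⟨a, b, c, i, hm, rfl⟩ := ht
      exact ⟨hm, hv⟩
    · obtain ⟨i, t, ht, hv⟩ := y
      refine ⟨?_, hv⟩
      rw [hR']
      exact ⟨t.1, t.2.1, t.2.2, i, by simpa using ht, rfl⟩
    · rintro ⟨t, ht, hv⟩
      simp only [Subtype.mk.injEq]
      rw [hR'] at ht
      obtain ⟨a, b, c, i, hm, rfl⟩ := ht
      rfl
    · rintro ⟨i, t, ht, hv⟩
      rfl
  have h1 : violCount R' r' = Nat.card {t ∈ R' | P t} := by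
    rw [violCount, Nat.card_coe_set_eq]
  rw [h1, Nat.card_congr key, nat_card_sigma']
  refine Finset.sum_congr rfl fun i _ => ?_
  rw [violCount, Nat.card_coe_set_eq]

lemma sto_restrict {S : Type*} {β : ℕ}
    (r' : S × Fin (β + 1) → S × Fin (β + 1) → Prop)
    (h : IsStrictTotalOrder _ r') (i : Fin (β + 1)) :
    IsStrictTotalOrder S (fun a b => r' (a, i) (b, i)) := by
  refine { trichotomous := ?_, irrefl := ?_, trans := ?_ }
  · intro a b
    intro hab hba
    refine Or.resolve_right (Or.resolve_left ?_ hab) hba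
    haveI := h
    rcases trichotomous_of r' (a, i) (b, i) with h1 | h1 | h1
    · exact Or.inl h1
    · exact Or.inr (Or.inl (congrArg Prod.fst h1))
    · exact Or.inr (Or.inr h1)
  · exact fun a => h.irrefl _
  · exact fun a b c => h.trans _ _ _

lemma sto_lex {S : Type*} {β : ℕ} (r : S → S → Prop) (h : IsStrictTotalOrder S r) :
    IsStrictTotalOrder (S × Fin (β + 1))
      (fun x y => x.2 < y.2 ∨ (x.2 = y.2 ∧ r x.1 y.1)) := by
  refine { trichotomous := ?_, irrefl := ?_, trans := ?_ }
  · rintro ⟨a, i⟩ ⟨b, j⟩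
    intro hab hba
    refine Or.resolve_right (Or.resolve_left ?_ hab) hba
    haveI := h
    rcases lt_trichotomy i j with hij | hij | hij
    · exact Or.inl (Or.inl hij)
    · rcases trichotomous_of r a b with hab | hab | hab
      · exact Or.inl (Or.inr ⟨hij, hab⟩)
      · exact Or.inr (Or.inl (by simp [hab, hij]))
      · exact Or.inr (Or.inr (Or.inr ⟨hij.symm, hab⟩))
    · exact Or.inr (Or.inr (Or.inl hij))
  · rintro ⟨a, i⟩ (hlt | ⟨-, hr⟩)
    · exact lt_irrefl _ hlt
    · exact h.irrefl a hr
  · rintro ⟨a, i⟩ ⟨b, j⟩ ⟨c, k⟩ (h1 | ⟨h1, h1'⟩) (h2 | ⟨h2, h2'⟩)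
    · exact Or.inl (lt_trans h1 h2)
    · exact Or.inl (h2 ▸ h1)
    · exact Or.inl (h1 ▸ h2)
    · exact Or.inr ⟨h1.trans h2, h.trans _ _ _ h1' h2'⟩

/-- Taking `β + 1` disjoint copies of a betweenness instance `(S, R)` multiplies
the minimum number of violated restrictions (over all strict total orders) by
`β + 1`; in particular this minimum is divisible by `β + 1`. -/
theorem copies_multiply_min_violations {S : Type*} [Fintype S]
    (R : Set (S × S × S))
    (hR : ∀ t ∈ R, t.1 ≠ t.2.1 ∧ t.2.1 ≠ t.2.2 ∧ t.1 ≠ t.2.2)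
    (β : ℕ) (hβ : 0 < β)
    (R' : Set ((S × Fin (β + 1)) × (S × Fin (β + 1)) × (S × Fin (β + 1))))
    (hR' : R' = {t | ∃ a b c : S, ∃ i : Fin (β + 1),
        (a, b, c) ∈ R ∧ t = ((a, i), (b, i), (c, i))}) :
    sInf {m : ℕ | ∃ r : S × Fin (β + 1) → S × Fin (β + 1) → Prop,
        IsStrictTotalOrder _ r ∧ m = violCount R' r} =
      (β + 1) * sInf {m : ℕ | ∃ r : S → S → Prop,
        IsStrictTotalOrder S r ∧ m = violCount R r} ∧
    (β + 1) ∣ sInf {m : ℕ | ∃ r : S × Fin (β + 1) → S × Fin (β + 1) → Prop,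
        IsStrictTotalOrder _ r ∧ m = violCount R' r} := by
  set A := {m : ℕ | ∃ r : S → S → Prop, IsStrictTotalOrder S r ∧ m = violCount R r} with hA
  set B := {m : ℕ | ∃ r : S × Fin (β + 1) → S × Fin (β + 1) → Prop,
      IsStrictTotalOrder _ r ∧ m = violCount R' r} with hB
  have hAne : A.Nonempty :=
    ⟨violCount R WellOrderingRel, WellOrderingRel, inferInstance, rfl⟩
  obtain ⟨r₀, hsto₀, hval₀⟩ := Nat.sInf_mem hAne
  -- upper bound
  have hBmem : (β + 1) * sInf A ∈ B := by
    refine ⟨fun x y => x.2 < y.2 ∨ (x.2 = y.2 ∧ r₀ x.1 y.1), sto_lex r₀ hsto₀, ?_⟩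
    rw [viol_sum R β R' hR']
    have : ∀ i : Fin (β + 1),
        (fun a b => (i < i ∨ (i = i ∧ r₀ a b))) = r₀ := by
      intro i; funext a b; simp
    calc (β + 1) * sInf A = ∑ _i : Fin (β + 1), violCount R r₀ := by
          simp [← hval₀, mul_comm]
      _ = _ := by
          refine Finset.sum_congr rfl fun i _ => ?_
          congr 1
          exact (this i).symm
  have hBne : B.Nonempty := ⟨_, hBmem⟩
  obtain ⟨r', hsto', hval'⟩ := Nat.sInf_mem hBne
  -- lower bound
  have hge : (β + 1) * sInf A ≤ sInf B := by
    rw [hval', viol_sum R β R' hR']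
    calc (β + 1) * sInf A = ∑ _i : Fin (β + 1), sInf A := by simp [mul_comm]
      _ ≤ _ := by
          refine Finset.sum_le_sum fun i _ => Nat.sInf_le ?_
          exact ⟨fun a b => r' (a, i) (b, i), sto_restrict r' hsto' i, rfl⟩
  have heq : sInf B = (β + 1) * sInf A := le_antisymm (Nat.sInf_le hBmem) hge
  exact ⟨heq, ⟨sInf A, heq⟩⟩
end

section
/- Let S be a finite set, R ⊆ S³ a set of restrictions with pairwise distinct entries, and suppose (A, B) is a separation of the 'support' graph H on S (where H has an edge {a,b} whenever a and b occur together in some restriction) such that every restriction has all three of its elements inside A or all three inside B. If ≺_A and ≺_B are total orders on A and B that agree on A ∩ B (i.e., their restrictions to A ∩ B coincide), then there exists a total order ≺ on S extending ≺_A on A and ≺_B on B whose number of violated restrictions equals the number violated by ≺_A on restrictions within A plus the number violated by ≺_B on restrictions within B minus the number violated by both within A ∩ B. -/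
/-- The restriction `t = (a,b,c)` is satisfied by `r`: `a ≺ b ≺ c` or `c ≺ b ≺ a`. -/
def Satisfies {S : Type*} (r : S → S → Prop) (t : S × S × S) : Prop :=
  (r t.1 t.2.1 ∧ r t.2.1 t.2.2) ∨ (r t.2.2 t.2.1 ∧ r t.2.1 t.1)

/-- The number of restrictions in `Rs` violated by `r`. -/
noncomputable def violOn {S : Type*} (r : S → S → Prop) (Rs : Set (S × S × S)) : ℕ :=
  {t ∈ Rs | ¬ Satisfies r t}.ncard

/-- `r` is a strict total order on the subset `A`. -/
def STOOn {S : Type*} (r : S → S → Prop) (A : Set S) : Prop :=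
  (∀ a ∈ A, ¬ r a a) ∧
  (∀ a ∈ A, ∀ b ∈ A, ∀ c ∈ A, r a b → r b c → r a c) ∧
  (∀ a ∈ A, ∀ b ∈ A, a ≠ b → r a b ∨ r b a) ∧
  (∀ a ∈ A, ∀ b ∈ A, r a b → ¬ r b a)

section GlueAux

variable {S : Type*} (A B : Set S) (rA rB : S → S → Prop)

/-- The union relation: `rA` within `A` or `rB` within `B`. -/
def gU (x y : S) : Prop :=
  (x ∈ A ∧ y ∈ A ∧ rA x y) ∨ (x ∈ B ∧ y ∈ B ∧ rB x y)

/-- Normal form of a chain of `gU`-steps. -/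
def gQ (x y : S) : Prop :=
  (x ∈ A ∧ y ∈ A ∧ rA x y) ∨ (x ∈ B ∧ y ∈ B ∧ rB x y) ∨
  (x ∈ A ∧ y ∈ B ∧ ∃ m ∈ A ∩ B, rA x m ∧ rB m y) ∨
  (x ∈ B ∧ y ∈ A ∧ ∃ m ∈ A ∩ B, rB x m ∧ rA m y)

variable {A B rA rB}
variable (hA : STOOn rA A) (hB : STOOn rB B)
  (hagree : ∀ x ∈ A ∩ B, ∀ y ∈ A ∩ B, (rA x y ↔ rB x y))

include hA hB hagree in
lemma gQ_to_A {x y : S} (h : gQ A B rA rB x y) (hx : x ∈ A) (hy : y ∈ A) : rA x y := by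
  obtain ⟨hAirr, hAtr, hAtot, hAasym⟩ := hA
  rcases h with ⟨_, _, h⟩ | ⟨hxB, hyB, h⟩ | ⟨_, hyB, m, hm, hxm, hmy⟩ | ⟨hxB, _, m, hm, hxm, hmy⟩
  · exact h
  · exact (hagree x ⟨hx, hxB⟩ y ⟨hy, hyB⟩).mpr h
  · exact hAtr x hx m hm.1 y hy hxm ((hagree m hm y ⟨hy, hyB⟩).mpr hmy)
  · exact hAtr x hx m hm.1 y hy ((hagree x ⟨hx, hxB⟩ m hm).mpr hxm) hmy

include hA hB hagree in
lemma gQ_to_B {x y : S} (h : gQ A B rA rB x y) (hx : x ∈ B) (hy : y ∈ B) : rB x y := by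
  obtain ⟨hBirr, hBtr, hBtot, hBasym⟩ := hB
  rcases h with ⟨hxA, hyA, h⟩ | ⟨_, _, h⟩ | ⟨hxA, _, m, hm, hxm, hmy⟩ | ⟨_, hyA, m, hm, hxm, hmy⟩
  · exact (hagree x ⟨hxA, hx⟩ y ⟨hyA, hy⟩).mp h
  · exact h
  · exact hBtr x hx m hm.2 y hy ((hagree x ⟨hxA, hx⟩ m hm).mp hxm) hmy
  · exact hBtr x hx m hm.2 y hy hxm ((hagree m hm y ⟨hyA, hy⟩).mp hmy)

include hA hB hagree in
lemma gQ_step {x y z : S} (hxy : gQ A B rA rB x y) (hyz : gU A B rA rB y z) :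
    gQ A B rA rB x z := by
  obtain ⟨hAirr, hAtr, hAtot, hAasym⟩ := hA
  obtain ⟨hBirr, hBtr, hBtot, hBasym⟩ := hB
  rcases hxy with ⟨hxA, hyA, h⟩ | ⟨hxB, hyB, h⟩ | ⟨hxA, hyB, m, hm, hxm, hmy⟩ |
      ⟨hxB, hyA, m, hm, hxm, hmy⟩ <;>
    rcases hyz with ⟨hyA', hzA, h'⟩ | ⟨hyB', hzB, h'⟩
  · exact Or.inl ⟨hxA, hzA, hAtr x hxA y hyA z hzA h h'⟩
  · exact Or.inr (Or.inr (Or.inl ⟨hxA, hzB, y, ⟨hyA, hyB'⟩, h, h'⟩))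
  · exact Or.inr (Or.inr (Or.inr ⟨hxB, hzA, y, ⟨hyA', hyB⟩, h, h'⟩))
  · exact Or.inr (Or.inl ⟨hxB, hzB, hBtr x hxB y hyB z hzB h h'⟩)
  · -- case 3 then an A-step: y ∈ A ∩ B
    have hmy' : rA m y := (hagree m hm y ⟨hyA', hyB⟩).mpr hmy
    exact Or.inl ⟨hxA, hzA, hAtr x hxA y hyA' z hzA
      (hAtr x hxA m hm.1 y hyA' hxm hmy') h'⟩
  · exact Or.inr (Or.inr (Or.inl ⟨hxA, hzB, m, hm, hxm, hBtr m hm.2 y hyB z hzB hmy h'⟩))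
  · exact Or.inr (Or.inr (Or.inr ⟨hxB, hzA, m, hm, hxm, hAtr m hm.1 y hyA z hzA hmy h'⟩))
  · -- case 4 then a B-step: y ∈ A ∩ B
    have hmy' : rB m y := (hagree m hm y ⟨hyA, hyB'⟩).mp hmy
    exact Or.inr (Or.inl ⟨hxB, hzB, hBtr x hxB y hyB' z hzB
      (hBtr x hxB m hm.2 y hyB' hxm hmy') h'⟩)

include hA hB hagree in
lemma gQ_of_rtg {x y : S} (h : Relation.ReflTransGen (gU A B rA rB) x y) :
    x = y ∨ gQ A B rA rB x y := by
  induction h with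
  | refl => exact Or.inl rfl
  | tail h1 h2 ih =>
    right
    rcases ih with rfl | hq
    · rcases h2 with ⟨h1, h2, h3⟩ | ⟨h1, h2, h3⟩
      · exact Or.inl ⟨h1, h2, h3⟩
      · exact Or.inr (Or.inl ⟨h1, h2, h3⟩)
    · exact gQ_step hA hB hagree hq h2

variable (hcov : ∀ z : S, z ∈ A ∨ z ∈ B)

include hA hB hagree hcov in
lemma gQ_asymm {x y : S} (hxy : gQ A B rA rB x y) (hyx : gQ A B rA rB y x) : False := by
  obtain ⟨hAirr, hAtr, hAtot, hAasym⟩ := hA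
  obtain ⟨hBirr, hBtr, hBtot, hBasym⟩ := hB
  by_cases hxA : x ∈ A <;> by_cases hyA : y ∈ A
  · exact hAasym x hxA y hyA (gQ_to_A ⟨hAirr, hAtr, hAtot, hAasym⟩
      ⟨hBirr, hBtr, hBtot, hBasym⟩ hagree hxy hxA hyA)
      (gQ_to_A ⟨hAirr, hAtr, hAtot, hAasym⟩ ⟨hBirr, hBtr, hBtot, hBasym⟩ hagree hyx hyA hxA)
  · have hyB : y ∈ B := (hcov y).resolve_left hyA
    by_cases hxB : x ∈ B
    · exact hBasym x hxB y hyB (gQ_to_B ⟨hAirr, hAtr, hAtot, hAasym⟩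
        ⟨hBirr, hBtr, hBtot, hBasym⟩ hagree hxy hxB hyB)
        (gQ_to_B ⟨hAirr, hAtr, hAtot, hAasym⟩ ⟨hBirr, hBtr, hBtot, hBasym⟩ hagree hyx hyB hxB)
    · -- x ∈ A \ B, y ∈ B \ A
      rcases hxy with ⟨_, h, _⟩ | ⟨h, _, _⟩ | ⟨_, _, m, hm, hxm, hmy⟩ | ⟨h, _, _⟩
      · exact hyA h
      · exact hxB h
      · rcases hyx with ⟨h, _, _⟩ | ⟨_, h, _⟩ | ⟨h, _, _⟩ | ⟨_, _, m', hm', hym', hm'x⟩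
        · exact hyA h
        · exact hxB h
        · exact hyA h
        · have hmm' : rB m m' := hBtr m hm.2 y hyB m' hm'.2 hmy hym'
          have hmm'A : rA m m' := (hagree m hm m' hm').mpr hmm'
          exact hAirr x hxA (hAtr x hxA m' hm'.1 x hxA
            (hAtr x hxA m hm.1 m' hm'.1 hxm hmm'A) hm'x)
      · exact hxB h
  · have hxB : x ∈ B := (hcov x).resolve_left hxA
    by_cases hyB : y ∈ B
    · exact hBasym x hxB y hyB (gQ_to_B ⟨hAirr, hAtr, hAtot, hAasym⟩
        ⟨hBirr, hBtr, hBtot, hBasym⟩ hagree hxy hxB hyB)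
        (gQ_to_B ⟨hAirr, hAtr, hAtot, hAasym⟩ ⟨hBirr, hBtr, hBtot, hBasym⟩ hagree hyx hyB hxB)
    · -- x ∈ B \ A, y ∈ A \ B
      rcases hxy with ⟨h, _, _⟩ | ⟨_, h, _⟩ | ⟨h, _, _⟩ | ⟨_, _, m, hm, hxm, hmy⟩
      · exact hxA h
      · exact hyB h
      · exact hxA h
      · rcases hyx with ⟨_, h, _⟩ | ⟨h, _, _⟩ | ⟨_, _, m', hm', hym', hm'x⟩ | ⟨h, _, _⟩
        · exact hxA h
        · exact hyB h
        · have hmm' : rA m m' := hAtr m hm.1 y hyA m' hm'.1 hmy hym'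
          have hmm'B : rB m m' := (hagree m hm m' hm').mp hmm'
          exact hBirr x hxB (hBtr x hxB m' hm'.2 x hxB
            (hBtr x hxB m hm.2 m' hm'.2 hxm hmm'B) hm'x)
        · exact hyB h
  · have hxB : x ∈ B := (hcov x).resolve_left hxA
    have hyB : y ∈ B := (hcov y).resolve_left hyA
    exact hBasym x hxB y hyB (gQ_to_B ⟨hAirr, hAtr, hAtot, hAasym⟩
      ⟨hBirr, hBtr, hBtot, hBasym⟩ hagree hxy hxB hyB)
      (gQ_to_B ⟨hAirr, hAtr, hAtot, hAasym⟩ ⟨hBirr, hBtr, hBtot, hBasym⟩ hagree hyx hyB hxB)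

end GlueAux

/-- Gluing orders across a separation: if `(A, B)` is a separation of the
support graph of `R` (so `A ∪ B = S` and every restriction lies entirely
inside `A` or entirely inside `B`), and `≺_A`, `≺_B` are total orders on `A`
and `B` agreeing on `A ∩ B`, then there is a total order `≺` on `S` extending
both whose number of violated restrictions equals the number violated by
`≺_A` within `A` plus the number violated by `≺_B` within `B` minus the
number violated within `A ∩ B`. -/
theorem glue_orders_across_separation {S : Type*} [Fintype S]
    (R : Set (S × S × S))
    (hRdist : ∀ t ∈ R, t.1 ≠ t.2.1 ∧ t.2.1 ≠ t.2.2 ∧ t.1 ≠ t.2.2)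
    (A B : Set S) (hcover : A ∪ B = Set.univ)
    (hsep : ∀ a ∈ A \ B, ∀ b ∈ B \ A,
      ¬ ∃ t ∈ R, a ∈ ({t.1, t.2.1, t.2.2} : Set S) ∧
                 b ∈ ({t.1, t.2.1, t.2.2} : Set S))
    (hwithin : ∀ t ∈ R, (t.1 ∈ A ∧ t.2.1 ∈ A ∧ t.2.2 ∈ A) ∨
                        (t.1 ∈ B ∧ t.2.1 ∈ B ∧ t.2.2 ∈ B))
    (rA rB : S → S → Prop) (hA : STOOn rA A) (hB : STOOn rB B)
    (hagree : ∀ x ∈ A ∩ B, ∀ y ∈ A ∩ B, (rA x y ↔ rB x y)) :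
    ∃ r : S → S → Prop, IsStrictTotalOrder S r ∧
      (∀ x ∈ A, ∀ y ∈ A, (r x y ↔ rA x y)) ∧
      (∀ x ∈ B, ∀ y ∈ B, (r x y ↔ rB x y)) ∧
      violOn r R =
        violOn rA {t ∈ R | t.1 ∈ A ∧ t.2.1 ∈ A ∧ t.2.2 ∈ A} +
        violOn rB {t ∈ R | t.1 ∈ B ∧ t.2.1 ∈ B ∧ t.2.2 ∈ B} -
        violOn rA {t ∈ R | t.1 ∈ A ∩ B ∧ t.2.1 ∈ A ∩ B ∧ t.2.2 ∈ A ∩ B} := by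
  classical
  have hcov : ∀ z : S, z ∈ A ∨ z ∈ B := by
    intro z
    have : z ∈ A ∪ B := hcover.symm ▸ Set.mem_univ z
    exact this
  obtain ⟨hAirr, hAtr, hAtot, hAasym⟩ := hA
  obtain ⟨hBirr, hBtr, hBtot, hBasym⟩ := hB
  have hA' : STOOn rA A := ⟨hAirr, hAtr, hAtot, hAasym⟩
  have hB' : STOOn rB B := ⟨hBirr, hBtr, hBtot, hBasym⟩
  -- the reflexive-transitive closure of the union relation is a partial order
  haveI hpo : IsPartialOrder S (Relation.ReflTransGen (gU A B rA rB)) := by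
    refine { refl := fun a => Relation.ReflTransGen.refl,
             trans := fun a b c => Relation.ReflTransGen.trans,
             antisymm := ?_ }
    intro x y hxy hyx
    rcases gQ_of_rtg hA' hB' hagree hxy with rfl | hq
    · rfl
    rcases gQ_of_rtg hA' hB' hagree hyx with rfl | hq'
    · rfl
    exact absurd (gQ_asymm hA' hB' hagree hcov hq hq') (fun h => h.elim)
  obtain ⟨s, hlin, hsub⟩ := extend_partialOrder (Relation.ReflTransGen (gU A B rA rB))
  -- the strict version of s
  set r : S → S → Prop := fun x y => s x y ∧ x ≠ y with hr
  have hstot : ∀ x y, s x y ∨ s y x := fun x y => hlin.total x y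
  have hsanti : ∀ x y, s x y → s y x → x = y := fun x y => hlin.toIsPartialOrder.antisymm x y
  have hstrans : ∀ x y z, s x y → s y z → s x z := fun x y z => hlin.trans x y z
  have hrSTO : IsStrictTotalOrder S r := by
    refine { trichotomous := ?_, irrefl := fun x h => h.2 rfl, trans := ?_ }
    · intro x y
      by_cases hxy : x = y
      · subst hxy
        exact fun _ _ => rfl
      · rcases hstot x y with h | h
        · exact fun h1 _ => (h1 ⟨h, hxy⟩).elim
        · exact fun _ h2 => (h2 ⟨h, fun e => hxy e.symm⟩).elim
    · intro x y z ⟨hxy, hne1⟩ ⟨hyz, hne2⟩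
      refine ⟨hstrans x y z hxy hyz, ?_⟩
      rintro rfl
      exact hne1 (hsanti x y hxy hyz)
  -- r extends rA on A
  have hextA : ∀ x ∈ A, ∀ y ∈ A, (r x y ↔ rA x y) := by
    intro x hx y hy
    constructor
    · rintro ⟨hsxy, hne⟩
      by_contra hnot
      have : rA y x := (hAtot x hx y hy hne).resolve_left hnot
      have : s y x := hsub _ _ (Relation.ReflTransGen.single (Or.inl ⟨hy, hx, this⟩))
      exact hne (hsanti x y hsxy this)
    · intro hxy
      refine ⟨hsub _ _ (Relation.ReflTransGen.single (Or.inl ⟨hx, hy, hxy⟩)), ?_⟩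
      rintro rfl
      exact hAirr x hx hxy
  have hextB : ∀ x ∈ B, ∀ y ∈ B, (r x y ↔ rB x y) := by
    intro x hx y hy
    constructor
    · rintro ⟨hsxy, hne⟩
      by_contra hnot
      have : rB y x := (hBtot x hx y hy hne).resolve_left hnot
      have : s y x := hsub _ _ (Relation.ReflTransGen.single (Or.inr ⟨hy, hx, this⟩))
      exact hne (hsanti x y hsxy this)
    · intro hxy
      refine ⟨hsub _ _ (Relation.ReflTransGen.single (Or.inr ⟨hx, hy, hxy⟩)), ?_⟩
      rintro rfl
      exact hBirr x hx hxy
  refine ⟨r, hrSTO, hextA, hextB, ?_⟩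
  -- counting
  have hsatA : ∀ t : S × S × S, t.1 ∈ A → t.2.1 ∈ A → t.2.2 ∈ A →
      (Satisfies r t ↔ Satisfies rA t) := by
    intro t h1 h2 h3
    unfold Satisfies
    rw [hextA _ h1 _ h2, hextA _ h2 _ h3, hextA _ h3 _ h2, hextA _ h2 _ h1]
  have hsatB : ∀ t : S × S × S, t.1 ∈ B → t.2.1 ∈ B → t.2.2 ∈ B →
      (Satisfies r t ↔ Satisfies rB t) := by
    intro t h1 h2 h3
    unfold Satisfies
    rw [hextB _ h1 _ h2, hextB _ h2 _ h3, hextB _ h3 _ h2, hextB _ h2 _ h1]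
  set VA : Set (S × S × S) :=
    {t ∈ {t ∈ R | t.1 ∈ A ∧ t.2.1 ∈ A ∧ t.2.2 ∈ A} | ¬ Satisfies rA t} with hVA
  set VB : Set (S × S × S) :=
    {t ∈ {t ∈ R | t.1 ∈ B ∧ t.2.1 ∈ B ∧ t.2.2 ∈ B} | ¬ Satisfies rB t} with hVB
  set VAB : Set (S × S × S) :=
    {t ∈ {t ∈ R | t.1 ∈ A ∩ B ∧ t.2.1 ∈ A ∩ B ∧ t.2.2 ∈ A ∩ B} | ¬ Satisfies rA t} with hVAB
  set V : Set (S × S × S) := {t ∈ R | ¬ Satisfies r t} with hV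
  have hunion : VA ∪ VB = V := by
    apply Set.eq_of_subset_of_subset
    · rintro t (⟨⟨htR, h1, h2, h3⟩, hns⟩ | ⟨⟨htR, h1, h2, h3⟩, hns⟩)
      · exact ⟨htR, fun hs => hns ((hsatA t h1 h2 h3).mp hs)⟩
      · exact ⟨htR, fun hs => hns ((hsatB t h1 h2 h3).mp hs)⟩
    · rintro t ⟨htR, hns⟩
      rcases hwithin t htR with ⟨h1, h2, h3⟩ | ⟨h1, h2, h3⟩
      · exact Or.inl ⟨⟨htR, h1, h2, h3⟩, fun hs => hns ((hsatA t h1 h2 h3).mpr hs)⟩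
      · exact Or.inr ⟨⟨htR, h1, h2, h3⟩, fun hs => hns ((hsatB t h1 h2 h3).mpr hs)⟩
  have hinter : VA ∩ VB = VAB := by
    apply Set.eq_of_subset_of_subset
    · rintro t ⟨⟨⟨htR, h1, h2, h3⟩, hns⟩, ⟨⟨_, h1', h2', h3'⟩, _⟩⟩
      exact ⟨⟨htR, ⟨h1, h1'⟩, ⟨h2, h2'⟩, ⟨h3, h3'⟩⟩, hns⟩
    · rintro t ⟨⟨htR, h1, h2, h3⟩, hns⟩
      refine ⟨⟨⟨htR, h1.1, h2.1, h3.1⟩, hns⟩, ⟨htR, h1.2, h2.2, h3.2⟩, ?_⟩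
      intro hsB
      apply hns
      have := (hsatB t h1.2 h2.2 h3.2).mpr hsB
      exact (hsatA t h1.1 h2.1 h3.1).mp this
  have hcard := Set.ncard_union_add_ncard_inter VA VB (Set.toFinite VA) (Set.toFinite VB)
  rw [hunion, hinter] at hcard
  show V.ncard = VA.ncard + VB.ncard - VAB.ncard
  omega
end
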